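/- (Theorem 4.1, parts 1 and 2, essentially cyclic rule) Let the sequences {x_k^t}, {x_0^t}, {y^t} be generated by the flexible ADMM (Algorithm 4) for the sharing problem under the period-T essentially cyclic rule, and suppose Assumption C holds. Then: (1) lim_{t→∞} ‖Σ_{k=1}^K A_k x_k^{t+1} − x_0^{t+1}‖ = 0; (2) every limit point ({x_k*}, x_0*, y*) of the sequence ({x_k^{t+1}}, x_0^{t+1}, y^{t+1}) is a stationary solution of the reformulated sharing problem, i.e.: x_k* minimizes x_k ↦ g_k(x_k) − ⟨y*, A_k x_k⟩ over X_k for each k ∈ 𝒦 (the indices with g_k convex); ⟨x_k − x_k*, ∇g_k(x_k*) − A_k^T y*⟩ ≥ 0 for all x_k ∈ X_k, for each k ∉ 𝒦; ∇ℓ(x_0*) + y* = 0; and Σ_{k=1}^K A_k x_k* = x_0*. -/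

import Mathlib

open Filter
open scoped RealInnerProductSpace BigOperators

section Aux

variable {E : Type*} [NormedAddCommGroup E] [InnerProductSpace ℝ E]

/-- minimizer of a strongly convex function -/
lemma thm41_sc_min {S : Set E} {γ : ℝ} {f : E → ℝ} (hf : StrongConvexOn S γ f)
    {a : E} (ha : a ∈ S) (hmin : ∀ z ∈ S, f a ≤ f z) :
    ∀ z ∈ S, f a + γ / 2 * ‖z - a‖ ^ 2 ≤ f z := by
  intro z hz
  have key : ∀ θ : ℝ, θ ∈ Set.Ioo (0:ℝ) 1 →
      f a + (1 - θ) * (γ / 2 * ‖z - a‖ ^ 2) ≤ f z := by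
    intro θ hθ
    have h1 : (0:ℝ) ≤ θ := hθ.1.le
    have h2 : (0:ℝ) ≤ 1 - θ := by linarith [hθ.2]
    have hsum : θ + (1 - θ) = 1 := by ring
    have hcx := hf.2 hz ha h1 h2 hsum
    have hmem : θ • z + (1 - θ) • a ∈ S := hf.1 hz ha h1 h2 hsum
    have hfa := hmin _ hmem
    simp only [smul_eq_mul] at hcx
    nlinarith [hθ.1, hθ.2]
  have hcont : Continuous (fun θ : ℝ => f a + (1 - θ) * (γ / 2 * ‖z - a‖ ^ 2)) := by continuity
  have htend : Tendsto (fun θ : ℝ => f a + (1 - θ) * (γ / 2 * ‖z - a‖ ^ 2))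
      (nhdsWithin 0 (Set.Ioi 0)) (nhds (f a + γ / 2 * ‖z - a‖ ^ 2)) := by
    have h := Tendsto.mono_left (hcont.tendsto 0)
      (nhdsWithin_le_nhds (s := Set.Ioi (0:ℝ)))
    simpa using h
  refine le_of_tendsto htend ?_
  filter_upwards [Ioo_mem_nhdsGT_of_mem (Set.left_mem_Ico.mpr one_pos)] with θ hθ
  exact key θ hθ

/-- adding an affine functional preserves strong convexity -/
lemma thm41_sc_add_affine {S : Set E} {γ : ℝ} {f : E → ℝ} (hf : StrongConvexOn S γ f)
    (b : E) (c : ℝ) :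
    StrongConvexOn S γ (fun z => f z + (⟪b, z⟫ + c)) := by
  refine ⟨hf.1, ?_⟩
  intro u hu v hv a a' ha ha' haa
  have := hf.2 hu hv ha ha' haa
  simp only [smul_eq_mul] at this ⊢
  rw [inner_add_right, real_inner_smul_right, real_inner_smul_right]
  have hc : a * c + a' * c = c := by rw [← add_mul, haa, one_mul]
  linarith [this, hc]

end Aux

section Aux2

variable {F : Type*} [NormedAddCommGroup F] [InnerProductSpace ℝ F] [CompleteSpace F]

/-- derivative of `θ ↦ l (u + θ • d)` -/
lemma thm41_line_hasDerivAt {l : F → ℝ} {l' : F → F}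
    (hgrad : ∀ z, HasGradientAt l (l' z) z) (u d : F) (θ : ℝ) :
    HasDerivAt (fun θ : ℝ => l (u + θ • d)) ⟪l' (u + θ • d), d⟫ θ := by
  have hline : HasDerivAt (fun θ : ℝ => u + θ • d) d θ := by
    simpa using ((hasDerivAt_id θ).smul_const d).const_add u
  have hfd : HasFDerivAt l (InnerProductSpace.toDual ℝ F (l' (u + θ • d))) (u + θ • d) :=
    (hgrad (u + θ • d))
  have := hfd.comp_hasDerivAt θ hline
  exact this

/-- descent lemma from Lipschitz gradient, via the mean value theorem -/
lemma thm41_descent {l : F → ℝ} {l' : F → F} {Lc : ℝ}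
    (hgrad : ∀ z, HasGradientAt l (l' z) z)
    (hLip : ∀ u v, ‖l' u - l' v‖ ≤ Lc * ‖u - v‖) (u v : F) :
    l v ≤ l u + ⟪l' u, v - u⟫ + Lc / 2 * ‖v - u‖ ^ 2 := by
  set d := v - u with hd
  set ψ : ℝ → ℝ := fun θ => l (u + θ • d) - θ * ⟪l' u, d⟫ - Lc / 2 * θ ^ 2 * ‖d‖ ^ 2 with hψ
  have hψ' : ∀ θ : ℝ, HasDerivAt ψ
      (⟪l' (u + θ • d), d⟫ - ⟪l' u, d⟫ - Lc * θ * ‖d‖ ^ 2) θ := by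
    intro θ
    have h1 := thm41_line_hasDerivAt hgrad u d θ
    have h2 : HasDerivAt (fun θ : ℝ => θ * ⟪l' u, d⟫) ⟪l' u, d⟫ θ := by
      simpa using (hasDerivAt_id θ).mul_const ⟪l' u, d⟫
    have h3 : HasDerivAt (fun θ : ℝ => Lc / 2 * θ ^ 2 * ‖d‖ ^ 2) (Lc * θ * ‖d‖ ^ 2) θ := by
      have : HasDerivAt (fun θ : ℝ => θ ^ 2) (2 * θ) θ := by
        simpa using hasDerivAt_pow 2 θ
      have := ((this.const_mul (Lc / 2)).mul_const (‖d‖ ^ 2))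
      exact this.congr_deriv (by ring)
    exact (h1.sub h2).sub h3
  obtain ⟨c, hc, hceq⟩ := exists_hasDerivAt_eq_slope ψ _ one_pos
    (fun θ _ => (hψ' θ).continuousAt.continuousWithinAt) (fun θ _ => hψ' θ)
  have hcle : ⟪l' (u + c • d), d⟫ - ⟪l' u, d⟫ - Lc * c * ‖d‖ ^ 2 ≤ 0 := by
    have h1 : ⟪l' (u + c • d) - l' u, d⟫ ≤ ‖l' (u + c • d) - l' u‖ * ‖d‖ :=
      real_inner_le_norm _ _
    have h2 : ‖l' (u + c • d) - l' u‖ ≤ Lc * ‖c • d‖ := by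
      simpa using hLip (u + c • d) u
    have h3 : ‖c • d‖ = c * ‖d‖ := by
      rw [norm_smul, Real.norm_eq_abs, abs_of_pos hc.1]
    have h4 : ⟪l' (u + c • d) - l' u, d⟫ = ⟪l' (u + c • d), d⟫ - ⟪l' u, d⟫ :=
      inner_sub_left _ _ _
    rw [h3] at h2
    have h5 : ‖l' (u + c • d) - l' u‖ * ‖d‖ ≤ Lc * (c * ‖d‖) * ‖d‖ :=
      mul_le_mul_of_nonneg_right h2 (norm_nonneg d)
    have hsq : ‖d‖ ^ 2 = ‖d‖ * ‖d‖ := sq ‖d‖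
    nlinarith [h1, h4, h5, hsq]
  have hψ1 : ψ 1 - ψ 0 ≤ 0 := by
    rw [hceq] at hcle
    have : (ψ 1 - ψ 0) / (1 - 0) = ψ 1 - ψ 0 := by ring
    linarith [this ▸ hcle]
  have e0 : ψ 0 = l u := by simp [hψ]
  have e1 : ψ 1 = l v - ⟪l' u, d⟫ - Lc / 2 * ‖d‖ ^ 2 := by
    have huv : u + d = v := by rw [hd]; abel
    simp [hψ, huv]
  rw [e0, e1] at hψ1
  linarith

/-- directional difference quotients converge to the inner product with the gradient -/
lemma thm41_slope_tendsto {gk : F → ℝ} {G : F} {a : F} (hg : HasGradientAt gk G a) (v : F) :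
    Tendsto (fun θ : ℝ => (gk (a + θ • v) - gk a) / θ) (nhdsWithin 0 (Set.Ioi 0))
      (nhds ⟪G, v⟫) := by
  have hline : HasDerivAt (fun θ : ℝ => gk (a + θ • v)) ⟪G, v⟫ 0 := by
    have hl : HasDerivAt (fun θ : ℝ => a + θ • v) v 0 := by
      simpa using ((hasDerivAt_id (0:ℝ)).smul_const v).const_add a
    have hfd : HasFDerivAt gk (InnerProductSpace.toDual ℝ F G) (a + (0:ℝ) • v) := by
      simpa using hg.hasFDerivAt
    have := hfd.comp_hasDerivAt 0 hl
    exact this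
  have := hasDerivAt_iff_tendsto_slope.mp hline
  have h2 := this.mono_left (nhdsWithin_mono 0 (by
    intro θ hθ
    exact ne_of_gt hθ : Set.Ioi (0:ℝ) ⊆ {(0:ℝ)}ᶜ))
  refine h2.congr (fun θ => ?_)
  simp [slope_def_field]

end Aux2

section Aux3

/-- telescoping bound -/
lemma thm41_telescope {W : Type*} [SeminormedAddCommGroup W] (u : ℕ → W) :
    ∀ a b : ℕ, a ≤ b → ‖u b - u a‖ ≤ ∑ j ∈ Finset.Ico a b, ‖u (j + 1) - u j‖ := by
  intro a b hab
  induction b, hab using Nat.le_induction with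
  | base => simp
  | succ b hab ih =>
    rw [Finset.sum_Ico_succ_top hab]
    have he : u (b + 1) - u a = (u b - u a) + (u (b + 1) - u b) := by abel
    rw [he]
    exact le_trans (norm_add_le _ _) (by linarith [ih])

/-- splitting a sum over `Fin K` at an index -/
lemma thm41_sum_split {K : ℕ} {W : Type*} [AddCommMonoid W] (k : Fin K) (f : Fin K → W) :
    ∑ j, f j = (∑ j ∈ Finset.univ.filter (fun j => j < k), f j) + f k
      + ∑ j ∈ Finset.univ.filter (fun j => k < j), f j := by
  classical
  have hdisj : Disjoint (Finset.univ.filter (fun j => j < k))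
      ({k} ∪ Finset.univ.filter (fun j => k < j)) := by
    simp only [Finset.disjoint_left, Finset.mem_filter, Finset.mem_union, Finset.mem_singleton]
    rintro j ⟨-, hj⟩ (rfl | ⟨-, hj'⟩)
    · exact absurd hj (lt_irrefl _)
    · exact absurd (hj.trans hj') (lt_irrefl _)
  have hdisj2 : Disjoint ({k} : Finset (Fin K)) (Finset.univ.filter (fun j => k < j)) := by
    simp only [Finset.disjoint_left, Finset.mem_filter, Finset.mem_singleton]
    rintro j rfl ⟨-, hj⟩
    exact absurd hj (lt_irrefl _)
  have hunion : Finset.univ.filter (fun j => j < k) ∪ ({k} ∪ Finset.univ.filter (fun j => k < j))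
      = Finset.univ := by
    ext j
    simp only [Finset.mem_union, Finset.mem_filter, Finset.mem_singleton, Finset.mem_univ,
      true_and, iff_true]
    rcases lt_trichotomy j k with h | h | h
    · exact Or.inl h
    · exact Or.inr (Or.inl h)
    · exact Or.inr (Or.inr h)
  have h := Finset.sum_union (f := f) hdisj
  rw [hunion] at h
  rw [h, Finset.sum_union hdisj2, Finset.sum_singleton, add_assoc]

end Aux3

/-- Augmented Lagrangian for the reformulated sharing problem:
`L({x_k}, x_0; y) = Σ_k g_k(x_k) + ℓ(x_0) + ⟨x_0 − Σ_k A_k x_k, y⟩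
  + (ρ/2)‖x_0 − Σ_k A_k x_k‖²`. -/
noncomputable def augLs {M K : ℕ} {Nv : Fin K → ℕ}
    (g : ∀ k : Fin K, EuclideanSpace ℝ (Fin (Nv k)) → ℝ)
    (l : EuclideanSpace ℝ (Fin M) → ℝ) (ρ : ℝ)
    (A : ∀ k : Fin K, EuclideanSpace ℝ (Fin (Nv k)) →L[ℝ] EuclideanSpace ℝ (Fin M))
    (xk : ∀ k : Fin K, EuclideanSpace ℝ (Fin (Nv k)))
    (x0 y : EuclideanSpace ℝ (Fin M)) : ℝ :=
  (∑ k, g k (xk k)) + l x0 + ⟪x0 - ∑ k, A k (xk k), y⟫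
    + ρ / 2 * ‖x0 - ∑ k, A k (xk k)‖ ^ 2

section AugId

variable {M K : ℕ} {Nv : Fin K → ℕ}
    (g : ∀ k : Fin K, EuclideanSpace ℝ (Fin (Nv k)) → ℝ)
    (l : EuclideanSpace ℝ (Fin M) → ℝ) (ρ : ℝ)
    (A : ∀ k : Fin K, EuclideanSpace ℝ (Fin (Nv k)) →L[ℝ] EuclideanSpace ℝ (Fin M))

lemma thm41_augLs_split (w : ∀ k : Fin K, EuclideanSpace ℝ (Fin (Nv k)))
    (x0 y : EuclideanSpace ℝ (Fin M)) (k : Fin K) :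
    augLs g l ρ A w x0 y
      = (g k (w k) - ⟪y, A k (w k)⟫
          + ρ / 2 * ‖x0 - (∑ j ∈ Finset.univ.filter (fun j => j < k), A j (w j))
              - (∑ j ∈ Finset.univ.filter (fun j => k < j), A j (w j)) - A k (w k)‖ ^ 2)
        + ((∑ j ∈ Finset.univ.filter (fun j => j < k), g j (w j))
            + (∑ j ∈ Finset.univ.filter (fun j => k < j), g j (w j)) + l x0
            + ⟪x0 - (∑ j ∈ Finset.univ.filter (fun j => j < k), A j (w j))
              - (∑ j ∈ Finset.univ.filter (fun j => k < j), A j (w j)), y⟫) := by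
  unfold augLs
  rw [thm41_sum_split k (fun j => g j (w j)), thm41_sum_split k (fun j => A j (w j))]
  have hvec : x0 - ((∑ j ∈ Finset.univ.filter (fun j => j < k), A j (w j)) + A k (w k)
      + ∑ j ∈ Finset.univ.filter (fun j => k < j), A j (w j))
      = (x0 - (∑ j ∈ Finset.univ.filter (fun j => j < k), A j (w j))
          - (∑ j ∈ Finset.univ.filter (fun j => k < j), A j (w j))) - A k (w k) := by
    abel
  rw [hvec, inner_sub_left, real_inner_comm (A k (w k)) y]
  ring

lemma thm41_augLs_x0 (w : ∀ k : Fin K, EuclideanSpace ℝ (Fin (Nv k)))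
    (x0 y : EuclideanSpace ℝ (Fin M)) :
    augLs g l ρ A w x0 y
      = (l x0 + ⟪y, x0⟫ + ρ / 2 * ‖x0 - ∑ k, A k (w k)‖ ^ 2)
        + ((∑ k, g k (w k)) - ⟪y, ∑ k, A k (w k)⟫) := by
  unfold augLs
  rw [inner_sub_left, real_inner_comm x0 y, real_inner_comm (∑ k, A k (w k)) y]
  ring

lemma thm41_augLs_y (w : ∀ k : Fin K, EuclideanSpace ℝ (Fin (Nv k)))
    (x0 y y' : EuclideanSpace ℝ (Fin M)) :
    augLs g l ρ A w x0 y'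
      = augLs g l ρ A w x0 y + ⟪x0 - ∑ k, A k (w k), y' - y⟫ := by
  unfold augLs
  rw [inner_sub_right]
  ring

end AugId
section SC2

open Filter
open scoped RealInnerProductSpace

variable {E F : Type*} [NormedAddCommGroup E] [InnerProductSpace ℝ E] [CompleteSpace E]
  [NormedAddCommGroup F] [InnerProductSpace ℝ F] [CompleteSpace F]

/-- strong convexity of the `x_k`-subproblem objective -/
lemma thm41_sc_sub {γ ρ : ℝ} {Xk : Set E} {gk : E → ℝ} {Ak : E →L[ℝ] F}
    (hsc : StrongConvexOn Xk γ (fun z => gk z + ρ / 2 * ‖Ak z‖ ^ 2)) (y c : F) :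
    StrongConvexOn Xk γ (fun z => gk z - ⟪y, Ak z⟫ + ρ / 2 * ‖c - Ak z‖ ^ 2) := by
  have hfe : (fun z => gk z - ⟪y, Ak z⟫ + ρ / 2 * ‖c - Ak z‖ ^ 2)
      = fun z => (gk z + ρ / 2 * ‖Ak z‖ ^ 2)
        + (⟪(ContinuousLinearMap.adjoint Ak) (-(y + ρ • c)), z⟫ + ρ / 2 * ‖c‖ ^ 2) := by
    funext z
    rw [ContinuousLinearMap.adjoint_inner_left, inner_neg_left, inner_add_left,
      real_inner_smul_left, norm_sub_sq_real]
    ring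
  rw [hfe]
  exact thm41_sc_add_affine hsc _ _

/-- strong convexity of the `x_0`-subproblem objective -/
lemma thm41_sc_x0 {γ ρ : ℝ} {l : F → ℝ}
    (hsc : StrongConvexOn Set.univ γ (fun z => l z + ρ / 2 * ‖z‖ ^ 2)) (y s : F) :
    StrongConvexOn Set.univ γ (fun z => l z + ⟪y, z⟫ + ρ / 2 * ‖z - s‖ ^ 2) := by
  have hfe : (fun z => l z + ⟪y, z⟫ + ρ / 2 * ‖z - s‖ ^ 2)
      = fun z => (l z + ρ / 2 * ‖z‖ ^ 2) + (⟪y - ρ • s, z⟫ + ρ / 2 * ‖s‖ ^ 2) := by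
    funext z
    rw [inner_sub_left, real_inner_smul_left, norm_sub_sq_real, real_inner_comm z s]
    ring
  rw [hfe]
  exact thm41_sc_add_affine hsc _ _

/-- first-order condition at the unconstrained minimizer of the `x_0`-subproblem -/
lemma thm41_x0_stationary {l : F → ℝ} {l' : F → F}
    (hgrad : ∀ z, HasGradientAt l (l' z) z) (ρ : ℝ) (y s xh : F)
    (hmin : ∀ z, l xh + ⟪y, xh⟫ + ρ / 2 * ‖xh - s‖ ^ 2
      ≤ l z + ⟪y, z⟫ + ρ / 2 * ‖z - s‖ ^ 2) :
    l' xh + y + ρ • (xh - s) = 0 := by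
  have h1 : HasFDerivAt l (InnerProductSpace.toDual ℝ F (l' xh)) xh := (hgrad xh).hasFDerivAt
  have h2 : HasFDerivAt (fun u : F => ⟪y, u⟫) (innerSL ℝ y) xh := (innerSL ℝ y).hasFDerivAt
  have h3 : HasFDerivAt (fun u : F => u - s) (ContinuousLinearMap.id ℝ F) xh :=
    (hasFDerivAt_id xh).sub_const s
  have h4 := h3.norm_sq
  have h5 := (h4.const_mul (ρ / 2))
  have hF : HasFDerivAt (fun z => l z + ⟪y, z⟫ + ρ / 2 * ‖z - s‖ ^ 2)
      (InnerProductSpace.toDual ℝ F (l' xh) + innerSL ℝ y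
        + (ρ / 2) • (2 • (innerSL ℝ (xh - s)).comp (ContinuousLinearMap.id ℝ F))) xh :=
    (h1.add h2).add h5
  have hloc : IsLocalMin (fun z => l z + ⟪y, z⟫ + ρ / 2 * ‖z - s‖ ^ 2) xh :=
    Filter.Eventually.of_forall hmin
  have h0 := hloc.hasFDerivAt_eq_zero hF
  set w := l' xh + y + ρ • (xh - s) with hw
  have happ : ∀ v : F, ⟪w, v⟫ = 0 := by
    intro v
    have := congrArg (fun D => D v) h0
    simp only [ContinuousLinearMap.add_apply, ContinuousLinearMap.smul_apply,
      ContinuousLinearMap.comp_apply, ContinuousLinearMap.id_apply,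
      ContinuousLinearMap.zero_apply, innerSL_apply_apply,
      InnerProductSpace.toDual_apply_apply] at this
    rw [hw, inner_add_left, inner_add_left, real_inner_smul_left]
    simp only [nsmul_eq_mul, smul_eq_mul, Nat.cast_ofNat] at this
    linarith [this]
  have := happ w
  rw [inner_self_eq_zero] at this
  exact this

end SC2

section Near

open Filter

/-- values along indices within bounded distance of a subsequence converge to the same limit -/
lemma thm41_near {W : Type*} [NormedAddCommGroup W] {u : ℕ → W} {T : ℕ}
    (hdu : Tendsto (fun n => ‖u (n + 1) - u n‖) atTop (nhds 0))
    {φ σ : ℕ → ℕ} (hφ : Tendsto φ atTop atTop)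
    (h1 : ∀ t, φ t ≤ σ t) (h2 : ∀ t, σ t ≤ φ t + T)
    {a : W} (hu : Tendsto (fun t => u (φ t)) atTop (nhds a)) :
    Tendsto (fun t => u (σ t)) atTop (nhds a) := by
  have hB : Tendsto (fun t => ∑ i ∈ Finset.range T, ‖u (φ t + i + 1) - u (φ t + i)‖)
      atTop (nhds 0) := by
    have h := tendsto_finset_sum (Finset.range T)
      (fun i _ => hdu.comp (tendsto_atTop_mono (fun t => Nat.le_add_right (φ t) i)
        (hφ : Tendsto φ atTop atTop)))
    simpa using h
  have hdiff : Tendsto (fun t => u (σ t) - u (φ t)) atTop (nhds 0) := by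
    rw [tendsto_zero_iff_norm_tendsto_zero]
    refine squeeze_zero (fun t => norm_nonneg _) (fun t => ?_) hB
    calc ‖u (σ t) - u (φ t)‖ ≤ ∑ j ∈ Finset.Ico (φ t) (σ t), ‖u (j + 1) - u j‖ :=
          thm41_telescope u _ _ (h1 t)
      _ ≤ ∑ j ∈ Finset.Ico (φ t) (φ t + T), ‖u (j + 1) - u j‖ := by
          refine Finset.sum_le_sum_of_subset_of_nonneg ?_ (fun _ _ _ => norm_nonneg _)
          exact Finset.Ico_subset_Ico le_rfl (h2 t)
      _ = ∑ i ∈ Finset.range T, ‖u (φ t + i + 1) - u (φ t + i)‖ := by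
          rw [Finset.sum_Ico_eq_sum_range]
          simp
  have := hu.add hdiff
  rw [add_zero] at this
  refine this.congr (fun t => ?_)
  abel
end Near
set_option maxHeartbeats 1000000 in
/-- **Theorem 4.1, parts 1 and 2** (essentially cyclic rule).  For the flexible ADMM
(Algorithm 4) on the sharing problem under the period-`T` essentially cyclic rule and
Assumption C: (1) `‖Σ_k A_k x_k^{t+1} − x_0^{t+1}‖ → 0`; (2) every limit point
`({x*_k}, x*_0, y*)` of the iterates is a stationary solution of the reformulated sharing
problem. -/
theorem theorem4_1_parts12
    {M K : ℕ} {Nv : Fin K → ℕ} (hK : 1 ≤ K)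
    (g : ∀ k : Fin K, EuclideanSpace ℝ (Fin (Nv k)) → ℝ)
    (l : EuclideanSpace ℝ (Fin M) → ℝ)
    (l' : EuclideanSpace ℝ (Fin M) → EuclideanSpace ℝ (Fin M))
    (A : ∀ k : Fin K, EuclideanSpace ℝ (Fin (Nv k)) →L[ℝ] EuclideanSpace ℝ (Fin M))
    (X : ∀ k : Fin K, Set (EuclideanSpace ℝ (Fin (Nv k))))
    (Lc ρ : ℝ)
    (x : ℕ → ∀ k : Fin K, EuclideanSpace ℝ (Fin (Nv k)))
    (x0 y : ℕ → EuclideanSpace ℝ (Fin M))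
    (C : ℕ → Finset (Option (Fin K)))
    -- Assumption C1
    (hgrad : ∀ z, HasGradientAt l (l' z) z)
    (hLpos : 0 < Lc)
    (hLip : ∀ u v, ‖l' u - l' v‖ ≤ Lc * ‖u - v‖)
    (hXne : ∀ k, (X k).Nonempty) (hXcl : ∀ k, IsClosed (X k))
    (hXcv : ∀ k, Convex ℝ (X k))
    (hA : ∀ k, Function.Injective (A k))
    (hρ : 0 < ρ)
    -- Algorithm 4
    (hC1 : C 1 = Finset.univ)
    (hxupd : ∀ (t : ℕ) (k : Fin K),
      (some k ∈ C (t + 1) → x (t + 1) k ∈ X k ∧ ∀ z ∈ X k,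
        g k (x (t + 1) k) - ⟪y t, A k (x (t + 1) k)⟫
            + ρ / 2 * ‖x0 t - (∑ j ∈ Finset.univ.filter (fun j => j < k), A j (x (t + 1) j))
                - (∑ j ∈ Finset.univ.filter (fun j => k < j), A j (x t j))
                - A k (x (t + 1) k)‖ ^ 2
          ≤ g k z - ⟪y t, A k z⟫
            + ρ / 2 * ‖x0 t - (∑ j ∈ Finset.univ.filter (fun j => j < k), A j (x (t + 1) j))
                - (∑ j ∈ Finset.univ.filter (fun j => k < j), A j (x t j))
                - A k z‖ ^ 2) ∧
      (some k ∉ C (t + 1) → x (t + 1) k = x t k))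
    (hx0upd : ∀ t : ℕ,
      (none ∈ C (t + 1) → ∀ z : EuclideanSpace ℝ (Fin M),
        l (x0 (t + 1)) + ⟪y t, x0 (t + 1)⟫
            + ρ / 2 * ‖x0 (t + 1) - ∑ k, A k (x (t + 1) k)‖ ^ 2
          ≤ l z + ⟪y t, z⟫ + ρ / 2 * ‖z - ∑ k, A k (x (t + 1) k)‖ ^ 2) ∧
      (none ∉ C (t + 1) → x0 (t + 1) = x0 t))
    (hyupd : ∀ t : ℕ,
      (none ∈ C (t + 1) →
        y (t + 1) = y t + ρ • (x0 (t + 1) - ∑ k, A k (x (t + 1) k))) ∧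
      (none ∉ C (t + 1) → y (t + 1) = y t))
    -- Assumption C2
    (γk : Fin K → ℝ) (γρ : ℝ)
    (hγkpos : ∀ k, 0 < γk k) (hγρpos : 0 < γρ)
    (hstrongk : ∀ k, StrongConvexOn (X k) (γk k)
      (fun z : EuclideanSpace ℝ (Fin (Nv k)) => g k z + ρ / 2 * ‖A k z‖ ^ 2))
    (hstrong0 : StrongConvexOn Set.univ γρ
      (fun z : EuclideanSpace ℝ (Fin M) => l z + ρ / 2 * ‖z‖ ^ 2))
    (hC2b : 2 * Lc ^ 2 < ρ * γρ) (hC2c : Lc ≤ ρ)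
    -- Assumption C4
    (KK : Finset (Fin K)) (Lgk : Fin K → ℝ)
    (gg' : ∀ k : Fin K, EuclideanSpace ℝ (Fin (Nv k)) → EuclideanSpace ℝ (Fin (Nv k)))
    (hKcvx : ∀ k ∈ KK, ConvexOn ℝ Set.univ (g k))
    (hKsm : ∀ k ∉ KK, (∀ z, HasGradientAt (g k) (gg' k z) z) ∧ 0 < Lgk k ∧
      ∀ u ∈ X k, ∀ v ∈ X k, ‖gg' k u - gg' k v‖ ≤ Lgk k * ‖u - v‖)
    -- Assumption C3 : `f` is bounded below over the feasible set
    (hbdd : BddBelow ((fun xx : ∀ k : Fin K, EuclideanSpace ℝ (Fin (Nv k)) =>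
      (∑ k, g k (xx k)) + l (∑ k, A k (xx k))) '' {xx | ∀ k, xx k ∈ X k}))
    -- period-T essentially cyclic rule
    (T : ℕ) (hT : 1 ≤ T)
    (hcyc : ∀ (t : ℕ) (j : Option (Fin K)), ∃ i, 1 ≤ i ∧ i ≤ T ∧ j ∈ C (t + i)) :
    Tendsto (fun t : ℕ => ‖(∑ k, A k (x (t + 1) k)) - x0 (t + 1)‖) atTop (nhds 0) ∧
    (∀ (xs : ∀ k : Fin K, EuclideanSpace ℝ (Fin (Nv k)))
        (x0s ys : EuclideanSpace ℝ (Fin M)) (φ : ℕ → ℕ), StrictMono φ →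
      (∀ k, Tendsto (fun t => x (φ t) k) atTop (nhds (xs k))) →
      Tendsto (fun t => x0 (φ t)) atTop (nhds x0s) →
      Tendsto (fun t => y (φ t)) atTop (nhds ys) →
      (∀ k ∈ KK, xs k ∈ X k ∧ ∀ z ∈ X k,
        g k (xs k) - ⟪ys, A k (xs k)⟫ ≤ g k z - ⟪ys, A k z⟫) ∧
      (∀ k ∉ KK, xs k ∈ X k ∧ ∀ z ∈ X k,
        0 ≤ ⟪z - xs k, gg' k (xs k)⟫ - ⟪A k (z - xs k), ys⟫) ∧
      l' x0s + ys = 0 ∧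
      (∑ k, A k (xs k)) = x0s) := by
  classical
  -- Step 0: feasibility of iterates for t ≥ 1
  have hfeas : ∀ t : ℕ, 1 ≤ t → ∀ k, x t k ∈ X k := by
    intro t ht
    induction t, ht using Nat.le_induction with
    | base =>
      intro k
      exact ((hxupd 0 k).1 (by rw [hC1]; exact Finset.mem_univ _)).1
    | succ t ht ih =>
      intro k
      by_cases hm : some k ∈ C (t + 1)
      · exact ((hxupd t k).1 hm).1
      · rw [(hxupd t k).2 hm]; exact ih k
  -- Step 1: dual identity
  have hyid : ∀ t : ℕ, none ∈ C (t + 1) → y (t + 1) = -l' (x0 (t + 1)) := by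
    intro t h0
    have hmin := (hx0upd t).1 h0
    have hst := thm41_x0_stationary hgrad ρ (y t) (∑ k, A k (x (t + 1) k)) (x0 (t + 1)) hmin
    have hyu := (hyupd t).1 h0
    rw [hyu]
    have : y t + ρ • (x0 (t + 1) - ∑ k, A k (x (t + 1) k))
        = (l' (x0 (t + 1)) + y t + ρ • (x0 (t + 1) - ∑ k, A k (x (t + 1) k))) - l' (x0 (t + 1)) := by
      abel
    rw [this, hst]
    abel
  have hyl : ∀ t : ℕ, 1 ≤ t → y t = -l' (x0 t) := by
    intro t ht
    induction t, ht using Nat.le_induction with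
    | base => exact hyid 0 (by rw [hC1]; exact Finset.mem_univ _)
    | succ t ht ih =>
      by_cases hm : none ∈ C (t + 1)
      · exact hyid t hm
      · rw [(hyupd t).2 hm, (hx0upd t).2 hm]; exact ih
  -- y-increment bound
  have hdyb : ∀ t : ℕ, 1 ≤ t → ‖y (t + 1) - y t‖ ≤ Lc * ‖x0 (t + 1) - x0 t‖ := by
    intro t ht
    by_cases hm : none ∈ C (t + 1)
    · rw [hyid t hm, hyl t ht]
      have h1 : -l' (x0 (t + 1)) - -l' (x0 t) = -(l' (x0 (t + 1)) - l' (x0 t)) := by abel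
      rw [h1, norm_neg]
      exact hLip _ _
    · rw [(hyupd t).2 hm, sub_self, norm_zero]
      positivity
  -- Step 2a: the x-sweep decreases the augmented Lagrangian
  have hsweep : ∀ t : ℕ, 1 ≤ t →
      augLs g l ρ A (x (t + 1)) (x0 t) (y t)
        + ∑ k, γk k / 2 * ‖x (t + 1) k - x t k‖ ^ 2
      ≤ augLs g l ρ A (x t) (x0 t) (y t) := by
    intro t ht
    set w : ℕ → ∀ j : Fin K, EuclideanSpace ℝ (Fin (Nv j)) :=
      fun i j => if (j : ℕ) < i then x (t + 1) j else x t j with hw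
    have hw0 : w 0 = x t := funext fun j => if_neg (Nat.not_lt_zero _)
    have hwK : w K = x (t + 1) := funext fun j => if_pos j.isLt
    have hstep : ∀ i : ℕ, ∀ hiK : i < K,
        augLs g l ρ A (w (i + 1)) (x0 t) (y t)
          + γk ⟨i, hiK⟩ / 2 * ‖x (t + 1) ⟨i, hiK⟩ - x t ⟨i, hiK⟩‖ ^ 2
        ≤ augLs g l ρ A (w i) (x0 t) (y t) := by
      intro i hiK
      set k : Fin K := ⟨i, hiK⟩ with hk
      have hwik : ∀ j : Fin K, j < k → w i j = x (t + 1) j := by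
        intro j hj
        have : (j : ℕ) < i := hj
        simp only [hw, if_pos this]
      have hwik' : ∀ j : Fin K, j < k → w (i + 1) j = x (t + 1) j := by
        intro j hj
        have : (j : ℕ) < i + 1 := Nat.lt_succ_of_lt hj
        simp only [hw, if_pos this]
      have hwgk : ∀ j : Fin K, k < j → w i j = x t j := by
        intro j hj
        have : ¬ (j : ℕ) < i := by
          have : i < (j : ℕ) := hj
          omega
        simp only [hw, if_neg this]
      have hwgk' : ∀ j : Fin K, k < j → w (i + 1) j = x t j := by
        intro j hj
        have : ¬ (j : ℕ) < i + 1 := by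
          have : i < (j : ℕ) := hj
          omega
        simp only [hw, if_neg this]
      have hwkk : w i k = x t k := by
        simp only [hw, hk, if_neg (lt_irrefl i)]
      have hwkk' : w (i + 1) k = x (t + 1) k := by
        simp only [hw, hk, if_pos (Nat.lt_succ_self i)]
      by_cases hm : some k ∈ C (t + 1)
      · obtain ⟨hxmem, hminP⟩ := (hxupd t k).1 hm
        have hsc : StrongConvexOn (X k) (γk k)
            (fun z => g k z - ⟪y t, A k z⟫
              + ρ / 2 * ‖x0 t - (∑ j ∈ Finset.univ.filter (fun j => j < k), A j (x (t + 1) j))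
                - (∑ j ∈ Finset.univ.filter (fun j => k < j), A j (x t j)) - A k z‖ ^ 2) :=
          thm41_sc_sub (hstrongk k) (y t) _
        have hq := thm41_sc_min hsc hxmem hminP (x t k) (hfeas t ht k)
        have hs1 := thm41_augLs_split g l ρ A (w (i + 1)) (x0 t) (y t) k
        have hs2 := thm41_augLs_split g l ρ A (w i) (x0 t) (y t) k
        have e1 : ∑ j ∈ Finset.univ.filter (fun j => j < k), A j (w (i + 1) j)
            = ∑ j ∈ Finset.univ.filter (fun j => j < k), A j (x (t + 1) j) :=
          Finset.sum_congr rfl fun j hj => by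
            rw [hwik' j (Finset.mem_filter.mp hj).2]
        have e2 : ∑ j ∈ Finset.univ.filter (fun j => j < k), A j (w i j)
            = ∑ j ∈ Finset.univ.filter (fun j => j < k), A j (x (t + 1) j) :=
          Finset.sum_congr rfl fun j hj => by
            rw [hwik j (Finset.mem_filter.mp hj).2]
        have e3 : ∑ j ∈ Finset.univ.filter (fun j => k < j), A j (w (i + 1) j)
            = ∑ j ∈ Finset.univ.filter (fun j => k < j), A j (x t j) :=
          Finset.sum_congr rfl fun j hj => by
            rw [hwgk' j (Finset.mem_filter.mp hj).2]
        have e4 : ∑ j ∈ Finset.univ.filter (fun j => k < j), A j (w i j)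
            = ∑ j ∈ Finset.univ.filter (fun j => k < j), A j (x t j) :=
          Finset.sum_congr rfl fun j hj => by
            rw [hwgk j (Finset.mem_filter.mp hj).2]
        have e5 : ∑ j ∈ Finset.univ.filter (fun j => j < k), g j (w (i + 1) j)
            = ∑ j ∈ Finset.univ.filter (fun j => j < k), g j (x (t + 1) j) :=
          Finset.sum_congr rfl fun j hj => by
            rw [hwik' j (Finset.mem_filter.mp hj).2]
        have e6 : ∑ j ∈ Finset.univ.filter (fun j => j < k), g j (w i j)
            = ∑ j ∈ Finset.univ.filter (fun j => j < k), g j (x (t + 1) j) :=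
          Finset.sum_congr rfl fun j hj => by
            rw [hwik j (Finset.mem_filter.mp hj).2]
        have e7 : ∑ j ∈ Finset.univ.filter (fun j => k < j), g j (w (i + 1) j)
            = ∑ j ∈ Finset.univ.filter (fun j => k < j), g j (x t j) :=
          Finset.sum_congr rfl fun j hj => by
            rw [hwgk' j (Finset.mem_filter.mp hj).2]
        have e8 : ∑ j ∈ Finset.univ.filter (fun j => k < j), g j (w i j)
            = ∑ j ∈ Finset.univ.filter (fun j => k < j), g j (x t j) :=
          Finset.sum_congr rfl fun j hj => by
            rw [hwgk j (Finset.mem_filter.mp hj).2]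
        rw [hs1, hs2, e1, e2, e3, e4, e5, e6, e7, e8, hwkk, hwkk']
        have hnr : ‖x t k - x (t + 1) k‖ = ‖x (t + 1) k - x t k‖ := norm_sub_rev _ _
        rw [hnr] at hq
        linarith [hq]
      · have hne : x (t + 1) k = x t k := (hxupd t k).2 hm
        have hweq : w (i + 1) = w i := by
          funext j
          by_cases hji : (j : ℕ) < i
          · simp only [hw, if_pos hji, if_pos (Nat.lt_succ_of_lt hji)]
          · by_cases hje : (j : ℕ) = i
            · have hjk : j = k := by
                apply Fin.ext
                exact hje
              simp only [hw, if_neg hji, if_pos (by omega : (j : ℕ) < i + 1)]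
              rw [hjk, hne]
            · simp only [hw, if_neg hji, if_neg (by omega : ¬ (j : ℕ) < i + 1)]
        rw [hweq, hne, sub_self, norm_zero]
        simp
    -- telescoping over the sweep
    have haux : ∀ i : ℕ, i ≤ K →
        augLs g l ρ A (w i) (x0 t) (y t)
          + ∑ j ∈ Finset.univ.filter (fun j : Fin K => (j : ℕ) < i),
              γk j / 2 * ‖x (t + 1) j - x t j‖ ^ 2
        ≤ augLs g l ρ A (w 0) (x0 t) (y t) := by
      intro i
      induction i with
      | zero => intro _; simp
      | succ i ih =>
        intro hiK
        have hiK' : i < K := hiK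
        have hins : Finset.univ.filter (fun j : Fin K => (j : ℕ) < i + 1)
            = insert (⟨i, hiK'⟩ : Fin K) (Finset.univ.filter (fun j : Fin K => (j : ℕ) < i)) := by
          ext j
          simp only [Finset.mem_filter, Finset.mem_univ, true_and, Finset.mem_insert,
            Fin.ext_iff]
          omega
        rw [hins, Finset.sum_insert (by simp)]
        have h1 := hstep i hiK'
        have h2 := ih (le_of_lt hiK')
        linarith
    have hfin := haux K (le_refl K)
    rw [hw0, hwK] at hfin
    have hflt : Finset.univ.filter (fun j : Fin K => (j : ℕ) < K) = Finset.univ := by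
      ext j
      simp [j.isLt]
    rw [hflt] at hfin
    exact hfin
  -- Step 2b: x0 and y updates
  have hdesc : ∀ t : ℕ, 1 ≤ t →
      augLs g l ρ A (x (t + 1)) (x0 (t + 1)) (y (t + 1))
        + (∑ k, γk k / 2 * ‖x (t + 1) k - x t k‖ ^ 2)
        + (γρ / 2 - Lc ^ 2 / ρ) * ‖x0 (t + 1) - x0 t‖ ^ 2
      ≤ augLs g l ρ A (x t) (x0 t) (y t) := by
    intro t ht
    have hsw := hsweep t ht
    by_cases hm : none ∈ C (t + 1)
    · have hminP := (hx0upd t).1 hm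
      have hsc := thm41_sc_x0 hstrong0 (y t) (∑ k, A k (x (t + 1) k))
      have hq := thm41_sc_min hsc (Set.mem_univ _) (fun z _ => hminP z) (x0 t) (Set.mem_univ _)
      have hid1 := thm41_augLs_x0 g l ρ A (x (t + 1)) (x0 (t + 1)) (y t)
      have hid2 := thm41_augLs_x0 g l ρ A (x (t + 1)) (x0 t) (y t)
      have hA0 : augLs g l ρ A (x (t + 1)) (x0 (t + 1)) (y t)
          + γρ / 2 * ‖x0 t - x0 (t + 1)‖ ^ 2
          ≤ augLs g l ρ A (x (t + 1)) (x0 t) (y t) := by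
        rw [hid1, hid2]
        linarith [hq]
      have hyidf := thm41_augLs_y g l ρ A (x (t + 1)) (x0 (t + 1)) (y t) (y (t + 1))
      have hyu := (hyupd t).1 hm
      have hΔ : y (t + 1) - y t = ρ • (x0 (t + 1) - ∑ k, A k (x (t + 1) k)) := by
        rw [hyu]; abel
      have hincr : ⟪x0 (t + 1) - ∑ k, A k (x (t + 1) k), y (t + 1) - y t⟫
          = ρ * ‖x0 (t + 1) - ∑ k, A k (x (t + 1) k)‖ ^ 2 := by
        rw [hΔ, real_inner_smul_right, real_inner_self_eq_norm_sq]
      have hdynorm : ‖y (t + 1) - y t‖ = ρ * ‖x0 (t + 1) - ∑ k, A k (x (t + 1) k)‖ := by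
        rw [hΔ, norm_smul, Real.norm_eq_abs, abs_of_pos hρ]
      have hb1 : ρ * ‖x0 (t + 1) - ∑ k, A k (x (t + 1) k)‖ ^ 2
          ≤ Lc ^ 2 / ρ * ‖x0 (t + 1) - x0 t‖ ^ 2 := by
        have h1 := hdyb t ht
        rw [hdynorm] at h1
        have h2 : 0 ≤ ‖x0 (t + 1) - ∑ k, A k (x (t + 1) k)‖ := norm_nonneg _
        have h3 : 0 ≤ ‖x0 (t + 1) - x0 t‖ := norm_nonneg _
        rw [div_mul_eq_mul_div, le_div_iff₀ hρ]
        nlinarith [h1, h2, h3, mul_le_mul h1 h1 (by positivity) (by positivity)]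
      have hnr : ‖x0 t - x0 (t + 1)‖ = ‖x0 (t + 1) - x0 t‖ := norm_sub_rev _ _
      rw [hnr] at hA0
      rw [hyidf]
      linarith [hsw, hA0, hincr, hb1]
    · have hx0e := (hx0upd t).2 hm
      have hye := (hyupd t).2 hm
      rw [hx0e, hye, sub_self, norm_zero]
      have h0 : ((0:ℝ)) ^ 2 = 0 := by norm_num
      rw [h0, mul_zero, add_zero]
      exact hsw
  -- Step 3: lower bound
  obtain ⟨cl, hcl⟩ := hbdd
  have hlow : ∀ t : ℕ, 1 ≤ t → cl ≤ augLs g l ρ A (x t) (x0 t) (y t) := by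
    intro t ht
    have hmem : (x t) ∈ {xx : ∀ k : Fin K, EuclideanSpace ℝ (Fin (Nv k)) | ∀ k, xx k ∈ X k} :=
      fun k => hfeas t ht k
    have hcl' := hcl (Set.mem_image_of_mem _ hmem)
    have hdl := thm41_descent hgrad hLip (x0 t) (∑ k, A k (x t k))
    have hinner : ⟪x0 t - ∑ k, A k (x t k), y t⟫
        = ⟪l' (x0 t), (∑ k, A k (x t k)) - x0 t⟫ := by
      rw [hyl t ht, inner_neg_right, real_inner_comm, ← inner_neg_right, neg_sub]
    have hns : ‖x0 t - ∑ k, A k (x t k)‖ = ‖(∑ k, A k (x t k)) - x0 t‖ := norm_sub_rev _ _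
    unfold augLs
    rw [hinner, hns]
    have hsq : 0 ≤ ‖(∑ k, A k (x t k)) - x0 t‖ ^ 2 := sq_nonneg _
    nlinarith [hcl', hdl, hsq]
  -- Step 4: vanishing increments
  set Lf : ℕ → ℝ := fun n => augLs g l ρ A (x (n + 1)) (x0 (n + 1)) (y (n + 1)) with hLf
  have hβ : 0 < γρ / 2 - Lc ^ 2 / ρ := by
    rw [sub_pos, div_lt_div_iff₀ hρ (by norm_num : (0:ℝ) < 2)]
    linarith
  have hsum_nonneg : ∀ t : ℕ, 0 ≤ ∑ k, γk k / 2 * ‖x (t + 1) k - x t k‖ ^ 2 := by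
    intro t
    refine Finset.sum_nonneg fun k _ => ?_
    have := (hγkpos k).le
    positivity
  have hmono : ∀ n : ℕ, Lf (n + 1) ≤ Lf n := by
    intro n
    have h := hdesc (n + 1) (by omega)
    have h2 := hsum_nonneg (n + 1)
    have h3 : 0 ≤ (γρ / 2 - Lc ^ 2 / ρ) * ‖x0 (n + 1 + 1) - x0 (n + 1)‖ ^ 2 := by positivity
    simp only [hLf]
    linarith
  have hbb : BddBelow (Set.range Lf) := by
    refine ⟨cl, ?_⟩
    rintro _ ⟨n, rfl⟩
    exact hlow (n + 1) (by omega)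
  have htendLf := tendsto_atTop_ciInf (antitone_nat_of_succ_le hmono) hbb
  have hLdiff : Tendsto (fun n => Lf n - Lf (n + 1)) atTop (nhds 0) := by
    have h2 : Tendsto (fun n => Lf (n + 1)) atTop (nhds (⨅ n, Lf n)) :=
      htendLf.comp (tendsto_add_atTop_nat 1)
    have := htendLf.sub h2
    simpa using this
  have hLdiff_arg : ∀ n : ℕ,
      (∑ k, γk k / 2 * ‖x (n + 1 + 1) k - x (n + 1) k‖ ^ 2)
        + (γρ / 2 - Lc ^ 2 / ρ) * ‖x0 (n + 1 + 1) - x0 (n + 1)‖ ^ 2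
      ≤ Lf n - Lf (n + 1) := by
    intro n
    have h := hdesc (n + 1) (by omega)
    simp only [hLf]
    linarith
  -- squared increments tend to zero
  have hdx : ∀ k : Fin K, Tendsto (fun n => ‖x (n + 1) k - x n k‖) atTop (nhds 0) := by
    intro k
    have hsq : Tendsto (fun n => γk k / 2 * ‖x (n + 1 + 1) k - x (n + 1) k‖ ^ 2) atTop (nhds 0) := by
      refine squeeze_zero (fun n => by have := (hγkpos k).le; positivity) (fun n => ?_) hLdiff
      have h1 := hLdiff_arg n
      have h2 : γk k / 2 * ‖x (n + 1 + 1) k - x (n + 1) k‖ ^ 2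
          ≤ ∑ j, γk j / 2 * ‖x (n + 1 + 1) j - x (n + 1) j‖ ^ 2 :=
        Finset.single_le_sum (f := fun j => γk j / 2 * ‖x (n + 1 + 1) j - x (n + 1) j‖ ^ 2)
          (fun j _ => by have := (hγkpos j).le; positivity) (Finset.mem_univ k)
      have h3 : 0 ≤ (γρ / 2 - Lc ^ 2 / ρ) * ‖x0 (n + 1 + 1) - x0 (n + 1)‖ ^ 2 := by
        have := hβ.le; positivity
      linarith
    have hsq2 : Tendsto (fun n => ‖x (n + 1 + 1) k - x (n + 1) k‖ ^ 2) atTop (nhds 0) := by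
      have h := hsq.const_mul (2 / γk k)
      rw [mul_zero] at h
      refine h.congr fun n => ?_
      rw [← mul_assoc]
      have hone : 2 / γk k * (γk k / 2) = 1 := by
        rw [div_mul_div_comm, mul_comm]
        exact div_self (by have := hγkpos k; positivity)
      rw [hone, one_mul]
    have hn : Tendsto (fun n => ‖x (n + 1 + 1) k - x (n + 1) k‖) atTop (nhds 0) := by
      have h := (Real.continuous_sqrt.tendsto 0).comp hsq2
      simp only [Real.sqrt_zero] at h
      refine h.congr fun n => ?_
      exact Real.sqrt_sq (norm_nonneg _)
    exact (tendsto_add_atTop_iff_nat 1).mp hn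
  have hdx0 : Tendsto (fun n => ‖x0 (n + 1) - x0 n‖) atTop (nhds 0) := by
    have hsq : Tendsto (fun n => (γρ / 2 - Lc ^ 2 / ρ) * ‖x0 (n + 1 + 1) - x0 (n + 1)‖ ^ 2)
        atTop (nhds 0) := by
      refine squeeze_zero (fun n => by have := hβ.le; positivity) (fun n => ?_) hLdiff
      have h1 := hLdiff_arg n
      have h2 := hsum_nonneg (n + 1)
      linarith
    have hsq2 : Tendsto (fun n => ‖x0 (n + 1 + 1) - x0 (n + 1)‖ ^ 2) atTop (nhds 0) := by
      have h := hsq.const_mul ((γρ / 2 - Lc ^ 2 / ρ)⁻¹)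
      rw [mul_zero] at h
      refine h.congr fun n => ?_
      exact inv_mul_cancel_left₀ hβ.ne' _
    have hn : Tendsto (fun n => ‖x0 (n + 1 + 1) - x0 (n + 1)‖) atTop (nhds 0) := by
      have h := (Real.continuous_sqrt.tendsto 0).comp hsq2
      simp only [Real.sqrt_zero] at h
      refine h.congr fun n => ?_
      exact Real.sqrt_sq (norm_nonneg _)
    exact (tendsto_add_atTop_iff_nat 1).mp hn
  have hdy : Tendsto (fun n => ‖y (n + 1) - y n‖) atTop (nhds 0) := by
    refine squeeze_zero' (g := fun n => Lc * ‖x0 (n + 1) - x0 n‖)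
      (Eventually.of_forall fun n => norm_nonneg _) ?_ ?_
    · filter_upwards [eventually_ge_atTop 1] with n hn
      exact hdyb n hn
    · have := hdx0.const_mul Lc
      simpa using this
  -- Step 5: part 1
  have hds : Tendsto (fun n => ‖(∑ k, A k (x (n + 1) k)) - ∑ k, A k (x n k)‖) atTop (nhds 0) := by
    have hbound : ∀ n, ‖(∑ k, A k (x (n + 1) k)) - ∑ k, A k (x n k)‖
        ≤ ∑ k, ‖A k‖ * ‖x (n + 1) k - x n k‖ := by
      intro n
      rw [← Finset.sum_sub_distrib]
      refine le_trans (norm_sum_le _ _) (Finset.sum_le_sum fun k _ => ?_)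
      rw [← map_sub]
      exact (A k).le_opNorm _
    have hlim : Tendsto (fun n => ∑ k, ‖A k‖ * ‖x (n + 1) k - x n k‖) atTop (nhds 0) := by
      have h := tendsto_finset_sum Finset.univ (fun k (_ : k ∈ Finset.univ) => (hdx k).const_mul ‖A k‖)
      simpa using h
    exact squeeze_zero (fun n => norm_nonneg _) hbound hlim
  set d : ℕ → ℝ := fun n => ‖x0 (n + 1) - x0 n‖
      + ‖(∑ k, A k (x (n + 1) k)) - ∑ k, A k (x n k)‖ + ‖y (n + 1) - y n‖ / ρ with hd
  have hd0 : Tendsto d atTop (nhds 0) := by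
    have h := (hdx0.add hds).add (hdy.div_const ρ)
    simpa using h
  have hdnn : ∀ n, 0 ≤ d n := fun n => by
    have := norm_nonneg (x0 (n + 1) - x0 n)
    have := norm_nonneg ((∑ k, A k (x (n + 1) k)) - ∑ k, A k (x n k))
    have h3 : 0 ≤ ‖y (n + 1) - y n‖ / ρ := by positivity
    simp only [hd]
    linarith
  have hEbound : ∀ n : ℕ, T + 1 ≤ n →
      ‖(∑ k, A k (x n k)) - x0 n‖ ≤ ∑ j ∈ Finset.Ico (n - T) n, d j := by
    intro n hn
    obtain ⟨i, hi1, hiT, hmem⟩ := hcyc (n - T) none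
    set m := n - T + i - 1 with hmdef
    have hm1 : m + 1 = n - T + i := by omega
    have hCm : none ∈ C (m + 1) := by rw [hm1]; exact hmem
    have hyu := (hyupd m).1 hCm
    have hΔ : y (m + 1) - y m = ρ • (x0 (m + 1) - ∑ k, A k (x (m + 1) k)) := by
      rw [hyu]; abel
    have hem : ‖(∑ k, A k (x (m + 1) k)) - x0 (m + 1)‖ = ‖y (m + 1) - y m‖ / ρ := by
      rw [hΔ, norm_smul, Real.norm_eq_abs, abs_of_pos hρ]
      rw [norm_sub_rev]
      field_simp
    have hm1n : m + 1 ≤ n := by omega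
    have htel := thm41_telescope (fun j => (∑ k, A k (x j k)) - x0 j) (m + 1) n hm1n
    have h1 : ‖(∑ k, A k (x n k)) - x0 n‖
        ≤ ‖(∑ k, A k (x (m + 1) k)) - x0 (m + 1)‖
          + ∑ j ∈ Finset.Ico (m + 1) n,
              ‖((∑ k, A k (x (j + 1) k)) - x0 (j + 1)) - ((∑ k, A k (x j k)) - x0 j)‖ := by
      have h2 : ((∑ k, A k (x n k)) - x0 n)
          = ((∑ k, A k (x (m + 1) k)) - x0 (m + 1))
            + (((∑ k, A k (x n k)) - x0 n) - ((∑ k, A k (x (m + 1) k)) - x0 (m + 1))) := by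
        abel
      calc ‖(∑ k, A k (x n k)) - x0 n‖
          ≤ ‖(∑ k, A k (x (m + 1) k)) - x0 (m + 1)‖
            + ‖((∑ k, A k (x n k)) - x0 n) - ((∑ k, A k (x (m + 1) k)) - x0 (m + 1))‖ := by
            conv_lhs => rw [h2]
            exact norm_add_le _ _
        _ ≤ _ := by
            exact add_le_add_right htel _
    have hterm : ∀ j : ℕ,
        ‖((∑ k, A k (x (j + 1) k)) - x0 (j + 1)) - ((∑ k, A k (x j k)) - x0 j)‖ ≤ d j := by
      intro j
      have h2 : ((∑ k, A k (x (j + 1) k)) - x0 (j + 1)) - ((∑ k, A k (x j k)) - x0 j)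
          = ((∑ k, A k (x (j + 1) k)) - ∑ k, A k (x j k)) - (x0 (j + 1) - x0 j) := by
        abel
      rw [h2]
      have h3 := norm_sub_le ((∑ k, A k (x (j + 1) k)) - ∑ k, A k (x j k)) (x0 (j + 1) - x0 j)
      have h4 : 0 ≤ ‖y (j + 1) - y j‖ / ρ := by positivity
      simp only [hd]
      linarith
    have h5 : ‖(∑ k, A k (x (m + 1) k)) - x0 (m + 1)‖ ≤ d m := by
      rw [hem]
      have h6 : 0 ≤ ‖x0 (m + 1) - x0 m‖ := norm_nonneg _
      have h7 : 0 ≤ ‖(∑ k, A k (x (m + 1) k)) - ∑ k, A k (x m k)‖ := norm_nonneg _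
      simp only [hd]
      linarith
    have h8 : ∑ j ∈ Finset.Ico (m + 1) n,
        ‖((∑ k, A k (x (j + 1) k)) - x0 (j + 1)) - ((∑ k, A k (x j k)) - x0 j)‖
        ≤ ∑ j ∈ Finset.Ico (m + 1) n, d j :=
      Finset.sum_le_sum fun j _ => hterm j
    have h9 : d m + ∑ j ∈ Finset.Ico (m + 1) n, d j ≤ ∑ j ∈ Finset.Ico (n - T) n, d j := by
      have hni : m ∉ Finset.Ico (m + 1) n := by simp
      rw [← Finset.sum_insert hni]
      refine Finset.sum_le_sum_of_subset_of_nonneg ?_ (fun j _ _ => hdnn j)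
      intro j hj
      simp only [Finset.mem_insert, Finset.mem_Ico] at hj ⊢
      omega
    linarith
  have hIco0 : Tendsto (fun n => ∑ j ∈ Finset.Ico (n - T) n, d j) atTop (nhds 0) := by
    have hG : Tendsto (fun n => ∑ i ∈ Finset.range T, d (n - T + i)) atTop (nhds 0) := by
      have h := tendsto_finset_sum (Finset.range T) (fun i (_ : i ∈ Finset.range T) =>
        hd0.comp (tendsto_atTop.mpr (fun b => eventually_atTop.mpr
          ⟨b + T, fun n hn => by omega⟩) : Tendsto (fun n : ℕ => n - T + i) atTop atTop))
      simpa using h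
    refine hG.congr' ?_
    filter_upwards [eventually_ge_atTop T] with n hn
    rw [Finset.sum_Ico_eq_sum_range]
    have hTT : n - (n - T) = T := by omega
    rw [hTT]
  have hE : Tendsto (fun n => ‖(∑ k, A k (x n k)) - x0 n‖) atTop (nhds 0) := by
    refine squeeze_zero' (Eventually.of_forall fun n => norm_nonneg _) ?_ hIco0
    filter_upwards [eventually_ge_atTop (T + 1)] with n hn
    exact hEbound n hn
  have hpart1 : Tendsto (fun t : ℕ => ‖(∑ k, A k (x (t + 1) k)) - x0 (t + 1)‖) atTop (nhds 0) :=
    hE.comp (tendsto_add_atTop_nat 1)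
  -- Step 6: part 2
  refine ⟨hpart1, ?_⟩
  intro xs x0s ys φ hφmono hxlim hx0lim hylim
  have hφt : Tendsto φ atTop atTop := hφmono.tendsto_atTop
  have hsum : (∑ k, A k (xs k)) = x0s := by
    have h1 : Tendsto (fun t => (∑ k, A k (x (φ t) k)) - x0 (φ t)) atTop
        (nhds ((∑ k, A k (xs k)) - x0s)) :=
      (tendsto_finset_sum _ (fun k _ => ((A k).continuous.tendsto _).comp (hxlim k))).sub hx0lim
    have h2 := h1.norm
    have h3 : Tendsto (fun t => ‖(∑ k, A k (x (φ t) k)) - x0 (φ t)‖) atTop (nhds 0) :=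
      hE.comp hφt
    have h4 : ‖(∑ k, A k (xs k)) - x0s‖ = 0 := tendsto_nhds_unique h2 h3
    rw [norm_eq_zero, sub_eq_zero] at h4
    exact h4
  have hl'cont : Continuous l' := by
    refine (LipschitzWith.of_dist_le_mul (K := Real.toNNReal Lc) (fun u v => ?_)).continuous
    rw [Real.coe_toNNReal _ hLpos.le, dist_eq_norm, dist_eq_norm]
    exact hLip u v
  have hys : l' x0s + ys = 0 := by
    have h1 : Tendsto (fun t => y (φ t)) atTop (nhds (-l' x0s)) := by
      have h2 : Tendsto (fun t => -l' (x0 (φ t))) atTop (nhds (-l' x0s)) :=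
        ((hl'cont.tendsto _).comp hx0lim).neg
      refine h2.congr' ?_
      filter_upwards [hφt.eventually_ge_atTop 1] with t ht
      exact (hyl (φ t) ht).symm
    have h3 := tendsto_nhds_unique hylim h1
    rw [h3]; abel
  have hgcont : ∀ k : Fin K, Continuous (g k) := by
    intro k
    by_cases hk : k ∈ KK
    · exact continuousOn_univ.mp ((hKcvx k hk).continuousOn isOpen_univ)
    · exact continuous_iff_continuousAt.mpr fun z => (((hKsm k hk).1 z).differentiableAt).continuousAt
  have hstar : ∀ k : Fin K, xs k ∈ X k ∧ ∀ z ∈ X k,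
      g k (xs k) - ⟪ys, A k (xs k)⟫
        ≤ g k z - ⟪ys, A k z⟫ + ρ / 2 * ‖A k (xs k) - A k z‖ ^ 2 := by
    intro k
    choose i hi1 hiT hmem using fun t => hcyc (φ t) (some k)
    set p : ℕ → ℕ := fun t => φ t + (i t - 1) with hpdef
    have hp1 : ∀ t, p t + 1 = φ t + i t := fun t => by
      have := hi1 t; simp only [hpdef]; omega
    have hmem' : ∀ t, some k ∈ C (p t + 1) := fun t => by rw [hp1 t]; exact hmem t
    have hupdt := fun t => (hxupd (p t) k).1 (hmem' t)
    have hb1 : ∀ t, φ t ≤ p t := fun t => by simp only [hpdef]; omega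
    have hb2 : ∀ t, p t ≤ φ t + T := fun t => by have := hiT t; simp only [hpdef]; omega
    have hb1' : ∀ t, φ t ≤ p t + 1 := fun t => by have := hb1 t; omega
    have hb2' : ∀ t, p t + 1 ≤ φ t + T := fun t => by
      have h1 := hp1 t; have h2 := hiT t; omega
    have hxp1 : ∀ j : Fin K, Tendsto (fun t => x (p t + 1) j) atTop (nhds (xs j)) :=
      fun j => thm41_near (u := fun n => x n j) (σ := fun t => p t + 1)
        (hdx j) hφt hb1' hb2' (hxlim j)
    have hxp : ∀ j : Fin K, Tendsto (fun t => x (p t) j) atTop (nhds (xs j)) :=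
      fun j => thm41_near (u := fun n => x n j) (σ := p) (hdx j) hφt hb1 hb2 (hxlim j)
    have hx0p : Tendsto (fun t => x0 (p t)) atTop (nhds x0s) :=
      thm41_near (u := x0) (σ := p) hdx0 hφt hb1 hb2 hx0lim
    have hyp : Tendsto (fun t => y (p t)) atTop (nhds ys) :=
      thm41_near (u := y) (σ := p) hdy hφt hb1 hb2 hylim
    have hxsmem : xs k ∈ X k :=
      (hXcl k).mem_of_tendsto (hxp1 k) (Eventually.of_forall fun t => (hupdt t).1)
    refine ⟨hxsmem, ?_⟩
    intro z hz
    have hctend : Tendsto (fun t => x0 (p t)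
          - (∑ j ∈ Finset.univ.filter (fun j => j < k), A j (x (p t + 1) j))
          - (∑ j ∈ Finset.univ.filter (fun j => k < j), A j (x (p t) j)))
        atTop (nhds (A k (xs k))) := by
      have h1 : Tendsto (fun t => ∑ j ∈ Finset.univ.filter (fun j => j < k), A j (x (p t + 1) j))
          atTop (nhds (∑ j ∈ Finset.univ.filter (fun j => j < k), A j (xs j))) :=
        tendsto_finset_sum _ (fun j _ => ((A j).continuous.tendsto _).comp (hxp1 j))
      have h2 : Tendsto (fun t => ∑ j ∈ Finset.univ.filter (fun j => k < j), A j (x (p t) j))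
          atTop (nhds (∑ j ∈ Finset.univ.filter (fun j => k < j), A j (xs j))) :=
        tendsto_finset_sum _ (fun j _ => ((A j).continuous.tendsto _).comp (hxp j))
      have h3 := (hx0p.sub h1).sub h2
      have h4 : x0s - (∑ j ∈ Finset.univ.filter (fun j => j < k), A j (xs j))
          - (∑ j ∈ Finset.univ.filter (fun j => k < j), A j (xs j)) = A k (xs k) := by
        rw [← hsum, thm41_sum_split k (fun j => A j (xs j))]
        abel
      rw [h4] at h3
      exact h3
    have hAk1 : Tendsto (fun t => A k (x (p t + 1) k)) atTop (nhds (A k (xs k))) :=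
      ((A k).continuous.tendsto _).comp (hxp1 k)
    have hLt : Tendsto (fun t => g k (x (p t + 1) k) - ⟪y (p t), A k (x (p t + 1) k)⟫
        + ρ / 2 * ‖x0 (p t)
          - (∑ j ∈ Finset.univ.filter (fun j => j < k), A j (x (p t + 1) j))
          - (∑ j ∈ Finset.univ.filter (fun j => k < j), A j (x (p t) j))
          - A k (x (p t + 1) k)‖ ^ 2) atTop
        (nhds (g k (xs k) - ⟪ys, A k (xs k)⟫)) := by
      have h1 : Tendsto (fun t => g k (x (p t + 1) k)) atTop (nhds (g k (xs k))) :=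
        ((hgcont k).tendsto _).comp (hxp1 k)
      have h2 : Tendsto (fun t => (⟪y (p t), A k (x (p t + 1) k)⟫ : ℝ)) atTop
          (nhds (⟪ys, A k (xs k)⟫ : ℝ)) := hyp.inner hAk1
      have h3 := ((hctend.sub hAk1).norm.pow 2).const_mul (ρ / 2)
      have h4 := (h1.sub h2).add h3
      have h5 : g k (xs k) - ⟪ys, A k (xs k)⟫ + ρ / 2 * ‖A k (xs k) - A k (xs k)‖ ^ 2
          = g k (xs k) - ⟪ys, A k (xs k)⟫ := by
        rw [sub_self, norm_zero]
        ring
      rw [h5] at h4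
      exact h4
    have hRt : Tendsto (fun t => g k z - ⟪y (p t), A k z⟫
        + ρ / 2 * ‖x0 (p t)
          - (∑ j ∈ Finset.univ.filter (fun j => j < k), A j (x (p t + 1) j))
          - (∑ j ∈ Finset.univ.filter (fun j => k < j), A j (x (p t) j))
          - A k z‖ ^ 2) atTop
        (nhds (g k z - ⟪ys, A k z⟫ + ρ / 2 * ‖A k (xs k) - A k z‖ ^ 2)) := by
      have h2 : Tendsto (fun t => (⟪y (p t), A k z⟫ : ℝ)) atTop (nhds (⟪ys, A k z⟫ : ℝ)) :=
        hyp.inner (tendsto_const_nhds : Tendsto (fun _ : ℕ => A k z) atTop (nhds (A k z)))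
      have h3 := ((hctend.sub
        (tendsto_const_nhds : Tendsto (fun _ : ℕ => A k z) atTop (nhds (A k z)))).norm.pow
          2).const_mul (ρ / 2)
      exact ((tendsto_const_nhds : Tendsto (fun _ : ℕ => g k z) atTop (nhds (g k z))).sub
        h2).add h3
    exact le_of_tendsto_of_tendsto' hLt hRt (fun t => (hupdt t).2 z hz)
  refine ⟨?_, ?_, hys, hsum⟩
  · -- k ∈ KK
    intro k hk
    obtain ⟨hxsmem, hineq⟩ := hstar k
    refine ⟨hxsmem, ?_⟩
    intro z hz
    set v := z - xs k with hv
    have key : ∀ θ : ℝ, θ ∈ Set.Ioc (0:ℝ) 1 →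
        g k (xs k) - ⟪ys, A k (xs k)⟫ - (g k z - ⟪ys, A k z⟫)
          ≤ θ * (ρ / 2 * ‖A k v‖ ^ 2) := by
      intro θ hθ
      have hθ0 : 0 < θ := hθ.1
      have hθ1 : θ ≤ 1 := hθ.2
      have hcv : (1 - θ) • xs k + θ • z = xs k + θ • v := by
        rw [hv, smul_sub, sub_smul, one_smul]; abel
      have hmemθ : xs k + θ • v ∈ X k := by
        have h1 := (hXcv k) hxsmem hz (by linarith : (0:ℝ) ≤ 1 - θ) hθ0.le (by ring)
        rwa [hcv] at h1
      have happ := hineq (xs k + θ • v) hmemθ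
      have hgzθ : g k (xs k + θ • v) ≤ (1 - θ) * g k (xs k) + θ * g k z := by
        have h1 := (hKcvx k hk).2 (Set.mem_univ (xs k)) (Set.mem_univ z)
          (by linarith : (0:ℝ) ≤ 1 - θ) hθ0.le (by ring)
        rw [hcv] at h1
        simpa using h1
      have hAv : A k (xs k + θ • v) = A k (xs k) + θ • A k v := by
        rw [map_add, map_smul]
      have hinner : (⟪ys, A k (xs k + θ • v)⟫ : ℝ) = ⟪ys, A k (xs k)⟫ + θ * ⟪ys, A k v⟫ := by
        rw [hAv, inner_add_right, real_inner_smul_right]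
      have hnorm : ‖A k (xs k) - A k (xs k + θ • v)‖ ^ 2 = θ ^ 2 * ‖A k v‖ ^ 2 := by
        rw [hAv]
        have h3 : A k (xs k) - (A k (xs k) + θ • A k v) = -(θ • A k v) := by abel
        rw [h3, norm_neg, norm_smul, Real.norm_eq_abs, mul_pow, sq_abs]
      rw [hinner, hnorm] at happ
      have hAvz : (⟪ys, A k v⟫ : ℝ) = ⟪ys, A k z⟫ - ⟪ys, A k (xs k)⟫ := by
        rw [hv, map_sub, inner_sub_right]
      have hineq2 : θ * (g k (xs k) - ⟪ys, A k (xs k)⟫ - (g k z - ⟪ys, A k z⟫))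
          ≤ θ * (θ * (ρ / 2 * ‖A k v‖ ^ 2)) := by
        nlinarith [happ, hgzθ, hAvz]
      exact le_of_mul_le_mul_left hineq2 hθ0
    have htend : Tendsto (fun θ : ℝ => θ * (ρ / 2 * ‖A k v‖ ^ 2))
        (nhdsWithin 0 (Set.Ioi 0)) (nhds 0) := by
      have hcont : Continuous (fun θ : ℝ => θ * (ρ / 2 * ‖A k v‖ ^ 2)) :=
        continuous_id.mul continuous_const
      have h := (hcont.tendsto (0:ℝ)).mono_left (nhdsWithin_le_nhds (s := Set.Ioi (0:ℝ)))
      simpa using h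
    have hfin : g k (xs k) - ⟪ys, A k (xs k)⟫ - (g k z - ⟪ys, A k z⟫) ≤ 0 := by
      refine ge_of_tendsto htend ?_
      filter_upwards [Ioc_mem_nhdsGT_of_mem (Set.left_mem_Ico.mpr one_pos)] with θ hθ
      exact key θ hθ
    linarith
  · -- k ∉ KK
    intro k hk
    obtain ⟨hxsmem, hineq⟩ := hstar k
    refine ⟨hxsmem, ?_⟩
    intro z hz
    set v := z - xs k with hv
    have key : ∀ θ : ℝ, θ ∈ Set.Ioc (0:ℝ) 1 →
        (⟪ys, A k v⟫ : ℝ) - θ * (ρ / 2 * ‖A k v‖ ^ 2)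
          ≤ (g k (xs k + θ • v) - g k (xs k)) / θ := by
      intro θ hθ
      have hθ0 : 0 < θ := hθ.1
      have hθ1 : θ ≤ 1 := hθ.2
      have hcv : (1 - θ) • xs k + θ • z = xs k + θ • v := by
        rw [hv, smul_sub, sub_smul, one_smul]; abel
      have hmemθ : xs k + θ • v ∈ X k := by
        have h1 := (hXcv k) hxsmem hz (by linarith : (0:ℝ) ≤ 1 - θ) hθ0.le (by ring)
        rwa [hcv] at h1
      have happ := hineq (xs k + θ • v) hmemθ
      have hAv : A k (xs k + θ • v) = A k (xs k) + θ • A k v := by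
        rw [map_add, map_smul]
      have hinner : (⟪ys, A k (xs k + θ • v)⟫ : ℝ) = ⟪ys, A k (xs k)⟫ + θ * ⟪ys, A k v⟫ := by
        rw [hAv, inner_add_right, real_inner_smul_right]
      have hnorm : ‖A k (xs k) - A k (xs k + θ • v)‖ ^ 2 = θ ^ 2 * ‖A k v‖ ^ 2 := by
        rw [hAv]
        have h3 : A k (xs k) - (A k (xs k) + θ • A k v) = -(θ • A k v) := by abel
        rw [h3, norm_neg, norm_smul, Real.norm_eq_abs, mul_pow, sq_abs]
      rw [hinner, hnorm] at happ
      rw [le_div_iff₀ hθ0]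
      nlinarith [happ]
    have hslope := thm41_slope_tendsto ((hKsm k hk).1 (xs k)) v
    have hlhs : Tendsto (fun θ : ℝ => (⟪ys, A k v⟫ : ℝ) - θ * (ρ / 2 * ‖A k v‖ ^ 2))
        (nhdsWithin 0 (Set.Ioi 0)) (nhds (⟪ys, A k v⟫ : ℝ)) := by
      have hcont : Continuous (fun θ : ℝ => (⟪ys, A k v⟫ : ℝ) - θ * (ρ / 2 * ‖A k v‖ ^ 2)) :=
        continuous_const.sub (continuous_id.mul continuous_const)
      have h := (hcont.tendsto (0:ℝ)).mono_left (nhdsWithin_le_nhds (s := Set.Ioi (0:ℝ)))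
      simpa using h
    have hfin : (⟪ys, A k v⟫ : ℝ) ≤ ⟪gg' k (xs k), v⟫ := by
      refine le_of_tendsto_of_tendsto hlhs hslope ?_
      filter_upwards [Ioc_mem_nhdsGT_of_mem (Set.left_mem_Ico.mpr one_pos)] with θ hθ
      exact key θ hθ
    have h1 : (⟪v, gg' k (xs k)⟫ : ℝ) = ⟪gg' k (xs k), v⟫ := real_inner_comm _ _
    have h2 : (⟪A k v, ys⟫ : ℝ) = ⟪ys, A k v⟫ := real_inner_comm _ _
    linarith
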